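/- Let α, β, δ, γ > 0 satisfy the triangle conditions δ + β > α, α + β > δ, δ + α > β and 2γ = α + β + δ. If (P, Q, R) and (P', Q', R') are two triples of rank-one orthogonal projections on ℂ² satisfying αP + βQ + δR = γI₂ = αP' + βQ' + δR', each with no common nontrivial invariant subspace, then there is a unitary 2×2 matrix U with UPU* = P', UQU* = Q', URU* = R'. -/

import Mathlib

open Matrix Complex

set_option linter.unusedVariables false
set_option linter.unreachableTactic false
set_option linter.unusedTactic false
set_option linter.unnecessarySeqFocus false

lemma aux_rank1 (M : Matrix (Fin 2) (Fin 2) ℂ) (h : M.rank = 1) : M.det = 0 ∧ M ≠ 0 := by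
  constructor
  · by_contra hd
    have : IsUnit M := (Matrix.isUnit_iff_isUnit_det M).mpr (Ne.isUnit hd)
    have := Matrix.rank_of_isUnit M this
    rw [h] at this
    simp [Fintype.card_fin] at this
  · rintro rfl
    rw [Matrix.rank_zero] at h
    exact one_ne_zero h.symm

lemma aux_struct (M : Matrix (Fin 2) (Fin 2) ℂ) (hH : M.IsHermitian) (h2 : M * M = M)
    (hr : M.rank = 1) :
    ∃ (a : ℝ) (b : ℂ), 0 ≤ a ∧ a ≤ 1 ∧ M = !![(a:ℂ), b; (starRingEnd ℂ) b, 1 - a] ∧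
      b * (starRingEnd ℂ) b = (a : ℂ) * (1 - a) := by
  obtain ⟨hdet, hne⟩ := aux_rank1 M hr
  rw [Matrix.det_fin_two] at hdet
  have c00 : M 0 0 * M 0 0 + M 0 1 * M 1 0 = M 0 0 := by
    have := congrFun (congrFun h2 0) 0
    rwa [Matrix.mul_apply, Fin.sum_univ_two] at this
  have c01 : M 0 0 * M 0 1 + M 0 1 * M 1 1 = M 0 1 := by
    have := congrFun (congrFun h2 0) 1
    rwa [Matrix.mul_apply, Fin.sum_univ_two] at this
  have c10 : M 1 0 * M 0 0 + M 1 1 * M 1 0 = M 1 0 := by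
    have := congrFun (congrFun h2 1) 0
    rwa [Matrix.mul_apply, Fin.sum_univ_two] at this
  have c11 : M 1 0 * M 0 1 + M 1 1 * M 1 1 = M 1 1 := by
    have := congrFun (congrFun h2 1) 1
    rwa [Matrix.mul_apply, Fin.sum_univ_two] at this
  have factor : ∀ z : ℂ, (M 0 0 + M 1 1 - 1) * z = 0 → z ≠ 0 → M 0 0 + M 1 1 = 1 := by
    intro z hz hz0
    rcases mul_eq_zero.mp hz with h5 | h5
    · linear_combination h5
    · exact absurd h5 hz0
  have hne' : ∃ i j : Fin 2, M i j ≠ 0 := by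
    by_contra hc
    push_neg at hc
    exact hne (Matrix.ext fun i j => hc i j)
  obtain ⟨i, j, hij⟩ := hne'
  have htr : M 0 0 + M 1 1 = 1 := by
    have hi : i = 0 ∨ i = 1 := by omega
    have hj : j = 0 ∨ j = 1 := by omega
    rcases hi with rfl | rfl <;> rcases hj with rfl | rfl
    · exact factor _ (by linear_combination c00 + hdet) hij
    · exact factor _ (by linear_combination c01) hij
    · exact factor _ (by linear_combination c10) hij
    · exact factor _ (by linear_combination c11 + hdet) hij
  have hre : ((M 0 0).re : ℂ) = M 0 0 := Complex.conj_eq_iff_re.mp (hH.apply 0 0)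
  have hcb : (starRingEnd ℂ) (M 0 1) = M 1 0 := hH.apply 1 0
  have hprod : M 0 1 * (starRingEnd ℂ) (M 0 1) = ((M 0 0).re : ℂ) * (1 - (M 0 0).re) := by
    rw [hcb]
    linear_combination -hdet + M 0 0 * htr + ((M 0 0).re + M 0 0 - 1) * hre
  have hns : Complex.normSq (M 0 1) = (M 0 0).re * (1 - (M 0 0).re) := by
    have := hprod
    rw [Complex.mul_conj] at this
    exact_mod_cast congrArg Complex.re this
  have hnn : (0:ℝ) ≤ (M 0 0).re * (1 - (M 0 0).re) := hns ▸ Complex.normSq_nonneg _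
  refine ⟨(M 0 0).re, M 0 1, by nlinarith, by nlinarith, ?_, hprod⟩
  ext i j
  have hi : i = 0 ∨ i = 1 := by omega
  have hj : j = 0 ∨ j = 1 := by omega
  rcases hi with rfl | rfl <;> rcases hj with rfl | rfl
  · simpa using hre.symm
  · simp
  · simpa using hcb.symm
  · show M 1 1 = 1 - ((M 0 0).re : ℂ)
    linear_combination htr + hre


lemma aux_conj_outer (a : ℝ) (b : ℂ) (ha1 : a < 1)
    (hb : b * (starRingEnd ℂ) b = (a : ℂ) * (1 - a)) :
    ∃ V ∈ Matrix.unitaryGroup (Fin 2) ℂ,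
      V * !![(1:ℂ),0;0,0] * star V = !![(a:ℂ), b; (starRingEnd ℂ) b, 1 - a] := by
  set c : ℝ := Real.sqrt (1 - a) with hc
  have hcpos : 0 < c := Real.sqrt_pos.mpr (by linarith)
  have hc2 : (c:ℂ)^2 = 1 - (a:ℂ) := by
    rw [← Complex.ofReal_pow]
    norm_cast
    exact Real.sq_sqrt (by linarith)
  have hc0 : (c:ℂ) ≠ 0 := by
    simpa using (Complex.ofReal_ne_zero.mpr (ne_of_gt hcpos))
  refine ⟨!![b/c, -(c:ℂ); (c:ℂ), (starRingEnd ℂ) b / c], ?_, ?_⟩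
  · rw [Matrix.mem_unitaryGroup_iff]
    ext i j
    have hi : i = 0 ∨ i = 1 := by omega
    have hj : j = 0 ∨ j = 1 := by omega
    rcases hi with rfl | rfl <;> rcases hj with rfl | rfl <;>
      simp [Matrix.mul_apply, Fin.sum_univ_two, Matrix.conjTranspose_apply,
        map_div₀, Complex.conj_ofReal, Matrix.one_apply] <;>
      (try field_simp) <;> first
        | linear_combination hb + ((c:ℂ)*c - (a:ℂ)) * hc2
        | linear_combination hb - (a:ℂ)*hc2
        | linear_combination hc2
        | ring
  · ext i j
    have hi : i = 0 ∨ i = 1 := by omega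
    have hj : j = 0 ∨ j = 1 := by omega
    rcases hi with rfl | rfl <;> rcases hj with rfl | rfl <;>
      (try simp [Matrix.mul_apply, Fin.sum_univ_two, Matrix.conjTranspose_apply,
        map_div₀, Complex.conj_ofReal]) <;>
      (try field_simp) <;> first
        | linear_combination hb + ((c:ℂ)*c - (a:ℂ)) * hc2
        | linear_combination hb - (a:ℂ)*hc2
        | linear_combination hc2


lemma aux_unit_det (V : Matrix (Fin 2) (Fin 2) ℂ) (hV : V ∈ Matrix.unitaryGroup (Fin 2) ℂ) :
    IsUnit V.det := by
  have h := Matrix.mem_unitaryGroup_iff.mp hV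
  have : V.det * (star V).det = 1 := by rw [← Matrix.det_mul, h, Matrix.det_one]
  exact IsUnit.of_mul_eq_one _ this

lemma aux_conj_herm (V A : Matrix (Fin 2) (Fin 2) ℂ) (hA : A.IsHermitian) :
    (V * A * star V).IsHermitian := by
  unfold Matrix.IsHermitian at *
  have : star V = Vᴴ := rfl
  rw [Matrix.conjTranspose_mul, Matrix.conjTranspose_mul, this, Matrix.conjTranspose_conjTranspose,
    hA, Matrix.mul_assoc]

lemma aux_conj_idem (V A : Matrix (Fin 2) (Fin 2) ℂ) (hV : V ∈ Matrix.unitaryGroup (Fin 2) ℂ)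
    (hA : A * A = A) : (V * A * star V) * (V * A * star V) = V * A * star V := by
  have h := Matrix.mem_unitaryGroup_iff'.mp hV
  calc (V * A * star V) * (V * A * star V) = V * A * (star V * V) * A * star V := by
        simp only [Matrix.mul_assoc]
    _ = V * A * star V := by rw [h, Matrix.mul_one, Matrix.mul_assoc V A A, hA]

lemma aux_conj_rank (V A : Matrix (Fin 2) (Fin 2) ℂ) (hV : V ∈ Matrix.unitaryGroup (Fin 2) ℂ) :
    (V * A * star V).rank = A.rank := by
  have h1 : IsUnit V.det := aux_unit_det V hV
  have h2 : IsUnit (star V).det := aux_unit_det (star V) (Unitary.star_mem hV)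
  rw [Matrix.rank_mul_eq_left_of_isUnit_det (star V) (V * A) h2,
    Matrix.rank_mul_eq_right_of_isUnit_det V A h1]

lemma aux_conj_cancel (V A : Matrix (Fin 2) (Fin 2) ℂ) (hV : V ∈ Matrix.unitaryGroup (Fin 2) ℂ) :
    star V * (V * A * star V) * V = A := by
  have h := Matrix.mem_unitaryGroup_iff'.mp hV
  calc star V * (V * A * star V) * V = (star V * V) * A * (star V * V) := by
        simp only [Matrix.mul_assoc]
    _ = A := by rw [h, Matrix.one_mul, Matrix.mul_one]

noncomputable def auxT (α β γ : ℝ) : ℝ := (γ-α)*(γ-β)/(α*β)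
noncomputable def auxS (α β γ : ℝ) : ℝ := Real.sqrt (auxT α β γ * (1 - auxT α β γ))
noncomputable def auxNQ (α β γ : ℝ) : Matrix (Fin 2) (Fin 2) ℂ :=
  !![((auxT α β γ : ℝ) : ℂ), ((auxS α β γ : ℝ) : ℂ);
     ((auxS α β γ : ℝ) : ℂ), 1 - ((auxT α β γ : ℝ) : ℂ)]

lemma aux_normal (α β δ γ : ℝ) (hα : 0 < α) (hβ : 0 < β) (hδ : 0 < δ) (hγ : 0 < γ)
    (h1 : δ + β > α) (h2 : α + β > δ) (h3 : δ + α > β) (hsum : 2 * γ = α + β + δ)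
    (P Q R : Matrix (Fin 2) (Fin 2) ℂ)
    (hP : P.IsHermitian) (hP2 : P * P = P) (hPr : P.rank = 1)
    (hQ : Q.IsHermitian) (hQ2 : Q * Q = Q) (hQr : Q.rank = 1)
    (hRr : R.rank = 1)
    (heq : (α : ℂ) • P + (β : ℂ) • Q + (δ : ℂ) • R = (γ : ℂ) • (1 : Matrix (Fin 2) (Fin 2) ℂ)) :
    ∃ V ∈ Matrix.unitaryGroup (Fin 2) ℂ,
      V * P * star V = !![(1:ℂ),0;0,0] ∧ V * Q * star V = auxNQ α β γ := by
  have ht0 : 0 < auxT α β γ :=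
    div_pos (mul_pos (by linarith) (by linarith)) (mul_pos hα hβ)
  have ht1 : auxT α β γ < 1 := by
    rw [auxT, div_lt_one (mul_pos hα hβ)]
    nlinarith [mul_pos hγ (show (0:ℝ) < γ - δ by linarith)]
  set t : ℝ := auxT α β γ with htdef
  set s : ℝ := auxS α β γ with hsdef
  have hs2 : s^2 = t*(1-t) := Real.sq_sqrt (by nlinarith)
  have hs0 : 0 < s := Real.sqrt_pos.mpr (by nlinarith)
  -- Step 1 : conjugate P to E11
  have step1 : ∃ V ∈ Matrix.unitaryGroup (Fin 2) ℂ, V * P * star V = !![(1:ℂ),0;0,0] := by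
    obtain ⟨a, b, ha0, ha1, hPM, hab⟩ := aux_struct P hP hP2 hPr
    rcases lt_or_eq_of_le ha1 with hlt | heq1
    · obtain ⟨W, hW, hWE⟩ := aux_conj_outer a b hlt hab
      refine ⟨star W, Unitary.star_mem hW, ?_⟩
      rw [star_star, hPM, ← hWE]
      exact aux_conj_cancel W _ hW
    · subst heq1
      have hb0 : b = 0 := by
        have : b * (starRingEnd ℂ) b = 0 := by rw [hab]; push_cast; ring
        rw [Complex.mul_conj] at this
        exact_mod_cast Complex.normSq_eq_zero.mp (by exact_mod_cast this)
      refine ⟨1, one_mem _, ?_⟩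
      rw [hPM, hb0]
      norm_num
  obtain ⟨V₁, hV₁, hV₁P⟩ := step1
  have hV₁u : V₁ * star V₁ = 1 := Matrix.mem_unitaryGroup_iff.mp hV₁
  set Q₁ := V₁ * Q * star V₁ with hQ₁def
  set R₁ := V₁ * R * star V₁ with hR₁def
  -- conjugated equation
  have heqc : (α:ℂ) • (!![(1:ℂ),0;0,0]) + (β:ℂ) • Q₁ + (δ:ℂ) • R₁
      = (γ:ℂ) • (1 : Matrix (Fin 2) (Fin 2) ℂ) := by
    have hc := congrArg (fun A => V₁ * A * star V₁) heq
    simp only [Matrix.add_mul, Matrix.mul_add, Matrix.mul_smul, Matrix.smul_mul,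
      Matrix.mul_one] at hc
    rw [hV₁u] at hc
    rw [← hV₁P]
    exact hc
  -- structure of Q₁
  obtain ⟨t', z, ht'0, ht'1, hQ₁M, hzz⟩ :=
    aux_struct Q₁ (aux_conj_herm V₁ Q hQ) (aux_conj_idem V₁ Q hV₁ hQ2)
      ((aux_conj_rank V₁ Q hV₁).trans hQr)
  have hdR : R₁.det = 0 := (aux_rank1 R₁ ((aux_conj_rank V₁ R hV₁).trans hRr)).1
  rw [Matrix.det_fin_two] at hdR
  rw [hQ₁M] at heqc
  -- entry equations
  have e00 : (α:ℂ) + β * t' + δ * R₁ 0 0 = γ := by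
    have := congrFun (congrFun heqc 0) 0; simpa using this
  have e01 : (β:ℂ) * z + δ * R₁ 0 1 = 0 := by
    have := congrFun (congrFun heqc 0) 1; simpa using this
  have e10 : (β:ℂ) * (starRingEnd ℂ) z + δ * R₁ 1 0 = 0 := by
    have := congrFun (congrFun heqc 1) 0; simpa using this
  have e11 : (β:ℂ) * (1 - t') + δ * R₁ 1 1 = γ := by
    have := congrFun (congrFun heqc 1) 1; simpa using this
  -- determine t'
  have d00 : (γ:ℂ) - α - β*t' = δ * R₁ 0 0 := by linear_combination -e00
  have d11 : (γ:ℂ) - β*(1-t') = δ * R₁ 1 1 := by linear_combination -e11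
  have d01 : (β:ℂ) * z = -(δ * R₁ 0 1) := by linear_combination e01
  have d10 : (β:ℂ) * (starRingEnd ℂ) z = -(δ * R₁ 1 0) := by linear_combination e10
  have hXY : ((γ:ℂ) - α - β*t') * ((γ:ℂ) - β*(1-t'))
      = ((β:ℂ)*z) * ((β:ℂ)*(starRingEnd ℂ) z) := by
    rw [d00, d11, d01, d10]
    linear_combination (δ:ℂ)^2 * hdR
  have key : (α:ℂ) * β * t' = ((γ:ℂ) - α) * ((γ:ℂ) - β) := by
    linear_combination -hXY - (β:ℂ)^2 * hzz
  have ht't : t' = t := by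
    have hcast : ((α*β*t' : ℝ) : ℂ) = (((γ-α)*(γ-β) : ℝ) : ℂ) := by
      push_cast; linear_combination key
    have hr : α*β*t' = (γ-α)*(γ-β) := Complex.ofReal_inj.mp hcast
    rw [htdef, auxT]
    field_simp
    linarith [hr]
  rw [ht't] at hQ₁M hzz
  have hzs : z * (starRingEnd ℂ) z = (s:ℂ)^2 := by
    rw [hzz]
    have h := congrArg (Complex.ofReal) hs2.symm
    push_cast at h
    exact h
  have hsc0 : (s:ℂ) ≠ 0 := by
    simpa using Complex.ofReal_ne_zero.mpr (ne_of_gt hs0)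
  set D : Matrix (Fin 2) (Fin 2) ℂ := !![(1:ℂ), 0; 0, z / s] with hDdef
  have hD : D ∈ Matrix.unitaryGroup (Fin 2) ℂ := by
    rw [Matrix.mem_unitaryGroup_iff]
    ext i j
    have hi : i = 0 ∨ i = 1 := by omega
    have hj : j = 0 ∨ j = 1 := by omega
    rcases hi with rfl | rfl <;> rcases hj with rfl | rfl <;>
      (try simp [hDdef, Matrix.mul_apply, Fin.sum_univ_two, Matrix.conjTranspose_apply,
        map_div₀, Complex.conj_ofReal, Matrix.one_apply]) <;>
      (try field_simp) <;>
      linear_combination hzs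
  refine ⟨D * V₁, mul_mem hD hV₁, ?_, ?_⟩
  · rw [Matrix.star_mul]
    calc D * V₁ * P * (star V₁ * star D) = D * (V₁ * P * star V₁) * star D := by
          simp only [Matrix.mul_assoc]
      _ = !![(1:ℂ),0;0,0] := by
          rw [hV₁P]
          ext i j
          have hi : i = 0 ∨ i = 1 := by omega
          have hj : j = 0 ∨ j = 1 := by omega
          rcases hi with rfl | rfl <;> rcases hj with rfl | rfl <;>
            simp [hDdef, Matrix.mul_apply, Fin.sum_univ_two, Matrix.conjTranspose_apply]
  · rw [Matrix.star_mul]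
    calc D * V₁ * Q * (star V₁ * star D) = D * (V₁ * Q * star V₁) * star D := by
          simp only [Matrix.mul_assoc]
      _ = auxNQ α β γ := by
          have hNQ : auxNQ α β γ = !![((t:ℝ):ℂ), ((s:ℝ):ℂ); ((s:ℝ):ℂ), 1 - ((t:ℝ):ℂ)] := rfl
          rw [← hQ₁def, hQ₁M, hNQ]
          ext i j
          have hi : i = 0 ∨ i = 1 := by omega
          have hj : j = 0 ∨ j = 1 := by omega
          rcases hi with rfl | rfl <;> rcases hj with rfl | rfl
          · simp [hDdef, Matrix.mul_apply, Fin.sum_univ_two, Matrix.conjTranspose_apply]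
          · simp [hDdef, Matrix.mul_apply, Fin.sum_univ_two, Matrix.conjTranspose_apply,
              map_div₀, Complex.conj_ofReal]
            field_simp
            linear_combination hzs
          · simp [hDdef, Matrix.mul_apply, Fin.sum_univ_two, Matrix.conjTranspose_apply,
              map_div₀, Complex.conj_ofReal]
            field_simp
            linear_combination hzs
          · simp [hDdef, Matrix.mul_apply, Fin.sum_univ_two, Matrix.conjTranspose_apply,
              map_div₀, Complex.conj_ofReal]
            field_simp
            linear_combination (1-(t:ℂ)) * hzs


theorem stmt_4 (α β δ γ : ℝ) (hα : 0 < α) (hβ : 0 < β) (hδ : 0 < δ) (hγ : 0 < γ)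
    (h1 : δ + β > α) (h2 : α + β > δ) (h3 : δ + α > β) (hsum : 2 * γ = α + β + δ)
    (P Q R P' Q' R' : Matrix (Fin 2) (Fin 2) ℂ)
    (hP : P.IsHermitian) (hP2 : P * P = P) (hPr : P.rank = 1)
    (hQ : Q.IsHermitian) (hQ2 : Q * Q = Q) (hQr : Q.rank = 1)
    (hR : R.IsHermitian) (hR2 : R * R = R) (hRr : R.rank = 1)
    (hP' : P'.IsHermitian) (hP'2 : P' * P' = P') (hP'r : P'.rank = 1)
    (hQ' : Q'.IsHermitian) (hQ'2 : Q' * Q' = Q') (hQ'r : Q'.rank = 1)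
    (hR' : R'.IsHermitian) (hR'2 : R' * R' = R') (hR'r : R'.rank = 1)
    (heq : (α : ℂ) • P + (β : ℂ) • Q + (δ : ℂ) • R = (γ : ℂ) • (1 : Matrix (Fin 2) (Fin 2) ℂ))
    (heq' : (α : ℂ) • P' + (β : ℂ) • Q' + (δ : ℂ) • R' = (γ : ℂ) • (1 : Matrix (Fin 2) (Fin 2) ℂ))
    (hirr : ∀ W : Submodule ℂ (Fin 2 → ℂ),
      (∀ x ∈ W, P.mulVec x ∈ W) → (∀ x ∈ W, Q.mulVec x ∈ W) →
      (∀ x ∈ W, R.mulVec x ∈ W) → W = ⊥ ∨ W = ⊤)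
    (hirr' : ∀ W : Submodule ℂ (Fin 2 → ℂ),
      (∀ x ∈ W, P'.mulVec x ∈ W) → (∀ x ∈ W, Q'.mulVec x ∈ W) →
      (∀ x ∈ W, R'.mulVec x ∈ W) → W = ⊥ ∨ W = ⊤) :
    ∃ U ∈ Matrix.unitaryGroup (Fin 2) ℂ,
      U * P * star U = P' ∧ U * Q * star U = Q' ∧ U * R * star U = R' := by
  obtain ⟨V, hV, hVP, hVQ⟩ :=
    aux_normal α β δ γ hα hβ hδ hγ h1 h2 h3 hsum P Q R hP hP2 hPr hQ hQ2 hQr hRr heq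
  obtain ⟨V', hV', hV'P, hV'Q⟩ :=
    aux_normal α β δ γ hα hβ hδ hγ h1 h2 h3 hsum P' Q' R' hP' hP'2 hP'r hQ' hQ'2 hQ'r hR'r heq'
  have hVu : V * star V = 1 := Matrix.mem_unitaryGroup_iff.mp hV
  have hV'u : V' * star V' = 1 := Matrix.mem_unitaryGroup_iff.mp hV'
  -- conjugated equations
  have hc : (α:ℂ) • (!![(1:ℂ),0;0,0]) + (β:ℂ) • auxNQ α β γ + (δ:ℂ) • (V * R * star V)
      = (γ:ℂ) • (1 : Matrix (Fin 2) (Fin 2) ℂ) := by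
    have h := congrArg (fun A => V * A * star V) heq
    simp only [Matrix.add_mul, Matrix.mul_add, Matrix.mul_smul, Matrix.smul_mul,
      Matrix.mul_one] at h
    rw [hVu] at h
    rw [← hVP, ← hVQ]
    exact h
  have hc' : (α:ℂ) • (!![(1:ℂ),0;0,0]) + (β:ℂ) • auxNQ α β γ + (δ:ℂ) • (V' * R' * star V')
      = (γ:ℂ) • (1 : Matrix (Fin 2) (Fin 2) ℂ) := by
    have h := congrArg (fun A => V' * A * star V') heq'
    simp only [Matrix.add_mul, Matrix.mul_add, Matrix.mul_smul, Matrix.smul_mul,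
      Matrix.mul_one] at h
    rw [hV'u] at h
    rw [← hV'P, ← hV'Q]
    exact h
  have hVR : V * R * star V = V' * R' * star V' := by
    have hdeq : (δ:ℂ) • (V * R * star V) = (δ:ℂ) • (V' * R' * star V') :=
      add_left_cancel (hc.trans hc'.symm)
    have hδ0 : (δ:ℂ) ≠ 0 := by
      simpa using Complex.ofReal_ne_zero.mpr (ne_of_gt hδ)
    exact smul_right_injective _ hδ0 hdeq
  refine ⟨star V' * V, mul_mem (Unitary.star_mem hV') hV, ?_, ?_, ?_⟩
  · have : star (star V' * V) = star V * V' := by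
      rw [Matrix.star_mul, star_star]
    rw [this]
    calc star V' * V * P * (star V * V') = star V' * (V * P * star V) * V' := by
          simp only [Matrix.mul_assoc]
      _ = star V' * (V' * P' * star V') * V' := by rw [hVP, hV'P]
      _ = P' := aux_conj_cancel V' P' hV'
  · have : star (star V' * V) = star V * V' := by
      rw [Matrix.star_mul, star_star]
    rw [this]
    calc star V' * V * Q * (star V * V') = star V' * (V * Q * star V) * V' := by
          simp only [Matrix.mul_assoc]
      _ = star V' * (V' * Q' * star V') * V' := by rw [hVQ, hV'Q]
      _ = Q' := aux_conj_cancel V' Q' hV'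
  · have : star (star V' * V) = star V * V' := by
      rw [Matrix.star_mul, star_star]
    rw [this]
    calc star V' * V * R * (star V * V') = star V' * (V * R * star V) * V' := by
          simp only [Matrix.mul_assoc]
      _ = star V' * (V' * R' * star V') * V' := by rw [hVR]
      _ = R' := aux_conj_cancel V' R' hV'
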